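/- Let v : [a,b] → ℝ be C¹ with 0 < a < b, N ≥ 2. Then a^(N−1)|v(a)| + b^(N−1)|v(b)| ≤ ((N a^(N−1) + N b^(N−1))/(b^N − a^N)) ∫_a^b |v(r)| r^(N−1) dr + ∫_a^b t^(N−1) |v'(t)| dt. -/

import Mathlib

open Set intervalIntegral

lemma key_ptw (a b t : ℝ) (m : ℕ) (ha : 0 ≤ a) (hat : a ≤ t) (htb : t ≤ b) :
    a ^ m * (b ^ (m+1) - t ^ (m+1)) + b ^ m * (t ^ (m+1) - a ^ (m+1)) ≤
      t ^ m * (b ^ (m+1) - a ^ (m+1)) := by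
  set S₁ : ℝ := ∑ i ∈ Finset.range m, t ^ i * a ^ (m - 1 - i) with hS₁
  set S₂ : ℝ := ∑ i ∈ Finset.range m, t ^ i * b ^ (m - 1 - i) with hS₂
  have h1 : S₁ * (t - a) = t ^ m - a ^ m := geom_sum₂_mul t a m
  have h2 : S₂ * (t - b) = t ^ m - b ^ m := geom_sum₂_mul t b m
  have key : a ^ m * S₂ ≤ b ^ m * S₁ := by
    rw [hS₁, hS₂, Finset.mul_sum, Finset.mul_sum]
    apply Finset.sum_le_sum
    intro i hi
    have him : i < m := Finset.mem_range.mp hi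
    have ht0 : 0 ≤ t := le_trans ha hat
    have hb0 : 0 ≤ b := le_trans ht0 htb
    obtain ⟨k, hk⟩ : ∃ k, m = k + (i + 1) := ⟨m - 1 - i, by omega⟩
    have hk' : m - 1 - i = k := by omega
    rw [hk', hk]
    have h5 : a ^ (i+1) ≤ b ^ (i+1) := pow_le_pow_left₀ ha (hat.trans htb) _
    calc a ^ (k + (i+1)) * (t ^ i * b ^ k) = (a ^ k * b ^ k * t ^ i) * a ^ (i+1) := by ring
      _ ≤ (a ^ k * b ^ k * t ^ i) * b ^ (i+1) := mul_le_mul_of_nonneg_left h5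
          (mul_nonneg (mul_nonneg (pow_nonneg ha k) (pow_nonneg hb0 k)) (pow_nonneg ht0 i))
      _ = b ^ (k + (i+1)) * (t ^ i * a ^ k) := by ring
  have pos : 0 ≤ (b - t) * (t - a) * (b ^ m * S₁ - a ^ m * S₂) :=
    mul_nonneg (mul_nonneg (by linarith) (by linarith)) (by linarith)
  have e1 : (b - t) * (t - a) * (b ^ m * S₁ - a ^ m * S₂)
      = t ^ m * (b ^ (m+1) - a ^ (m+1)) -
        (a ^ m * (b ^ (m+1) - t ^ (m+1)) + b ^ m * (t ^ (m+1) - a ^ (m+1))) := by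
    have e2 : (b - t) * (t - a) * (b ^ m * S₁) = (b - t) * b ^ m * (t ^ m - a ^ m) := by
      rw [← h1]; ring
    have e3 : (b - t) * (t - a) * (a ^ m * S₂) = -((t - a) * a ^ m * (t ^ m - b ^ m)) := by
      rw [← h2]; ring
    rw [mul_sub, e2, e3, pow_succ, pow_succ, pow_succ]; ring
  linarith [e1 ▸ pos]

theorem radial_trace_inequality_annulus (a b : ℝ) (N : ℕ) (hN : 2 ≤ N)
    (ha : 0 < a) (hab : a < b) (v v' : ℝ → ℝ)
    (hderiv : ∀ t ∈ Icc a b, HasDerivAt v (v' t) t)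
    (hcont : ContinuousOn v' (Icc a b)) :
    a ^ (N - 1) * |v a| + b ^ (N - 1) * |v b| ≤
      (((N : ℝ) * a ^ (N - 1) + (N : ℝ) * b ^ (N - 1)) / (b ^ N - a ^ N)) *
          (∫ r in a..b, |v r| * r ^ (N - 1)) +
        ∫ t in a..b, t ^ (N - 1) * |v' t| := by
  obtain ⟨m, rfl⟩ : ∃ m, N = m + 1 := ⟨N - 1, by omega⟩
  simp only [Nat.add_sub_cancel]
  push_cast
  set c : ℝ := (m : ℝ) + 1 with hcdef
  have hc0 : (0:ℝ) < c := by positivity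
  have hab' : a ≤ b := hab.le
  have hb0 : (0:ℝ) < b := ha.trans hab
  have hIcc : uIcc a b = Icc a b := uIcc_of_le hab'
  -- projection onto [a, b] and extended derivative-norm function
  set proj : ℝ → ℝ := fun s => min (max s a) b with hprojdef
  have hprojmem : ∀ s, proj s ∈ Icc a b :=
    fun s => ⟨le_min (le_max_right _ _) hab', min_le_right _ _⟩
  have hprojeq : ∀ s ∈ Icc a b, proj s = s := by
    intro s hs
    simp only [hprojdef]
    rw [max_eq_left hs.1, min_eq_left hs.2]
  have hprojcont : Continuous proj := (continuous_id.max continuous_const).min continuous_const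
  set g : ℝ → ℝ := fun s => |v' (proj s)| with hgdef
  have hgcont : Continuous g := continuous_abs.comp (hcont.comp_continuous hprojcont hprojmem)
  have hgnn : ∀ s, 0 ≤ g s := fun s => abs_nonneg _
  have hgeq : ∀ s ∈ Icc a b, g s = |v' s| := fun s hs => by
    simp only [hgdef]; rw [hprojeq s hs]
  set G : ℝ → ℝ := fun t => ∫ s in a..t, g s with hGdef
  have hG : ∀ t, HasDerivAt G (g t) t := fun t => (hgcont.integral_hasStrictDerivAt a t).hasDerivAt
  have hGcont : Continuous G := continuous_iff_continuousAt.mpr fun t => (hG t).continuousAt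
  have hGa : G a = 0 := integral_same
  have hvc : ContinuousOn v (Icc a b) := fun t ht => (hderiv t ht).continuousAt.continuousWithinAt
  -- trace estimates
  have hA : ∀ t ∈ Icc a b, |v a| ≤ |v t| + G t := by
    intro t ht
    have hsub : Icc a t ⊆ Icc a b := Icc_subset_Icc le_rfl ht.2
    have hft : ∫ s in a..t, v' s = v t - v a := by
      apply integral_eq_sub_of_hasDerivAt
      · intro s hs
        exact hderiv s (hsub ((uIcc_of_le ht.1) ▸ hs))
      · exact ContinuousOn.intervalIntegrable (by rw [uIcc_of_le ht.1]; exact hcont.mono hsub)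
    have habs : |v t - v a| ≤ ∫ s in a..t, |v' s| := by
      rw [← hft]; exact intervalIntegral.abs_integral_le_integral_abs ht.1
    have hGt : G t = ∫ s in a..t, |v' s| := by
      apply integral_congr
      intro s hs
      exact hgeq s (hsub ((uIcc_of_le ht.1) ▸ hs))
    have := abs_sub_abs_le_abs_sub (v a) (v t)
    rw [abs_sub_comm] at this
    linarith [hGt ▸ habs]
  have hB : ∀ t ∈ Icc a b, |v b| ≤ |v t| + (G b - G t) := by
    intro t ht
    have hsub : Icc t b ⊆ Icc a b := Icc_subset_Icc ht.1 le_rfl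
    have hft : ∫ s in t..b, v' s = v b - v t := by
      apply integral_eq_sub_of_hasDerivAt
      · intro s hs
        exact hderiv s (hsub ((uIcc_of_le ht.2) ▸ hs))
      · exact ContinuousOn.intervalIntegrable (by rw [uIcc_of_le ht.2]; exact hcont.mono hsub)
    have habs : |v b - v t| ≤ ∫ s in t..b, |v' s| := by
      rw [← hft]; exact intervalIntegral.abs_integral_le_integral_abs ht.2
    have hGt : G b - G t = ∫ s in t..b, |v' s| := by
      have hsplit : (∫ s in a..b, g s) - ∫ s in a..t, g s = ∫ s in t..b, g s :=
        integral_interval_sub_left (hgcont.intervalIntegrable a b) (hgcont.intervalIntegrable a t)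
      rw [hGdef]
      simp only []
      rw [hsplit]
      apply integral_congr
      intro s hs
      exact hgeq s (hsub ((uIcc_of_le ht.2) ▸ hs))
    have := abs_sub_abs_le_abs_sub (v b) (v t)
    linarith [hGt ▸ habs]
  -- notation for the integrals
  set J : ℝ := ∫ t in a..b, t ^ m * |v t| with hJdef
  set W : ℝ := ∫ t in a..b, t ^ m * g t with hWdef
  set Q : ℝ := ∫ t in a..b, t ^ m * G t with hQdef
  set B : ℝ := b ^ (m+1) - a ^ (m+1) with hBdef
  have hB0 : 0 < B := sub_pos.mpr (pow_lt_pow_left₀ hab ha.le (Nat.succ_ne_zero m))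
  have hKint : (∫ t in a..b, (t:ℝ) ^ m) = B / c := by
    rw [integral_pow]
  -- integrabilities
  have hintP : IntervalIntegrable (fun t : ℝ => t ^ m) MeasureTheory.volume a b :=
    (continuous_pow m).intervalIntegrable a b
  have hintPv : IntervalIntegrable (fun t => t ^ m * |v t|) MeasureTheory.volume a b := by
    apply ContinuousOn.intervalIntegrable
    rw [hIcc]
    exact ((continuous_pow m).continuousOn).mul hvc.abs
  have hintPG : IntervalIntegrable (fun t => t ^ m * G t) MeasureTheory.volume a b :=
    ((continuous_pow m).mul hGcont).intervalIntegrable a b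
  have htnn : ∀ t ∈ Icc a b, (0:ℝ) ≤ t ^ m := fun t ht => pow_nonneg (ha.le.trans ht.1) m
  -- first integral inequality
  have Ia : B / c * |v a| ≤ J + Q := by
    have h1 : (∫ t in a..b, t ^ m * |v a|) ≤ ∫ t in a..b, (t ^ m * |v t| + t ^ m * G t) := by
      apply integral_mono_on hab' (hintP.mul_const _) (hintPv.add hintPG)
      intro t ht
      have := mul_le_mul_of_nonneg_left (hA t ht) (htnn t ht)
      rw [mul_add] at this
      exact this
    rw [integral_mul_const, hKint] at h1
    rw [integral_add hintPv hintPG] at h1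
    exact h1
  have Ib : B / c * |v b| ≤ J + (B / c * G b - Q) := by
    have h1 : (∫ t in a..b, t ^ m * |v b|) ≤
        ∫ t in a..b, (t ^ m * |v t| + (t ^ m * G b - t ^ m * G t)) := by
      apply integral_mono_on hab' (hintP.mul_const _)
        ((hintPv.add ((hintP.mul_const _).sub hintPG)))
      intro t ht
      have := mul_le_mul_of_nonneg_left (hB t ht) (htnn t ht)
      rw [mul_add, mul_sub] at this
      exact this
    rw [integral_mul_const, hKint] at h1
    rw [integral_add hintPv ((hintP.mul_const _).sub hintPG),
      integral_sub (hintP.mul_const _) hintPG, integral_mul_const, hKint] at h1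
    exact h1
  -- integration by parts : Q = ∫ (b^(m+1) - t^(m+1))/c * g t
  have hu : ∀ x : ℝ, HasDerivAt (fun s => (s ^ (m+1) - b ^ (m+1)) / c) (x ^ m) x := by
    intro x
    have h := ((hasDerivAt_pow (m+1) x).sub_const (b ^ (m+1))).div_const c
    refine h.congr_deriv ?_
    rw [hcdef]
    push_cast
    field_simp
  have hQeq : Q = ∫ t in a..b, (b ^ (m+1) - t ^ (m+1)) / c * g t := by
    have hibp := integral_mul_deriv_eq_deriv_mul (a := a) (b := b)
      (u := fun s => (s ^ (m+1) - b ^ (m+1)) / c) (v := G)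
      (u' := fun x : ℝ => x ^ m) (v' := g)
      (fun x _ => hu x) (fun x _ => hG x) hintP (hgcont.intervalIntegrable a b)
    simp only [hGa, mul_zero, sub_zero, sub_self, zero_div, zero_mul, zero_sub] at hibp
    have h3 : (∫ t in a..b, (b ^ (m+1) - t ^ (m+1)) / c * g t)
        = -∫ x in a..b, (x ^ (m+1) - b ^ (m+1)) / c * g x := by
      rw [← integral_neg]
      apply integral_congr
      intro s _
      ring
    rw [h3, hibp, neg_neg, hQdef]
  -- combine
  have hintg : IntervalIntegrable g MeasureTheory.volume a b := hgcont.intervalIntegrable a b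
  have hint1 : IntervalIntegrable (fun t => (b ^ (m+1) - t ^ (m+1)) / c * g t)
      MeasureTheory.volume a b :=
    (((continuous_const.sub (continuous_pow (m+1))).div_const c).mul hgcont).intervalIntegrable a b
  have hGbeq : B / c * G b = (∫ t in a..b, (b ^ (m+1) - t ^ (m+1)) / c * g t) +
      ∫ t in a..b, (t ^ (m+1) - a ^ (m+1)) / c * g t := by
    have hint2 : IntervalIntegrable (fun t => (t ^ (m+1) - a ^ (m+1)) / c * g t)
        MeasureTheory.volume a b :=
      ((((continuous_pow (m+1)).sub continuous_const).div_const c).mul hgcont).intervalIntegrable a b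
    rw [← integral_add hint1 hint2]
    have : B / c * G b = ∫ s in a..b, B / c * g s := by
      rw [hGdef]; simp only []
      rw [integral_const_mul]
    rw [this]
    apply integral_congr
    intro s _
    rw [hBdef]
    field_simp
    ring
  -- the weighted sum of the derivative terms is bounded by W * B / c
  have hWbound : a ^ m * (∫ t in a..b, (b ^ (m+1) - t ^ (m+1)) / c * g t) +
      b ^ m * (∫ t in a..b, (t ^ (m+1) - a ^ (m+1)) / c * g t) ≤ B / c * W := by
    have hint2 : IntervalIntegrable (fun t => (t ^ (m+1) - a ^ (m+1)) / c * g t)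
        MeasureTheory.volume a b :=
      ((((continuous_pow (m+1)).sub continuous_const).div_const c).mul hgcont).intervalIntegrable a b
    rw [← integral_const_mul, ← integral_const_mul, ← integral_add
      (f := fun t => a ^ m * ((b ^ (m+1) - t ^ (m+1)) / c * g t))
      (g := fun t => b ^ m * ((t ^ (m+1) - a ^ (m+1)) / c * g t))
      ((continuous_const.mul (((continuous_const.sub (continuous_pow (m+1))).div_const c).mul
        hgcont)).intervalIntegrable a b)
      ((continuous_const.mul ((((continuous_pow (m+1)).sub continuous_const).div_const c).mul
        hgcont)).intervalIntegrable a b)]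
    have hW2 : B / c * W = ∫ t in a..b, B / c * (t ^ m * g t) := by
      rw [hWdef, integral_const_mul]
    rw [hW2]
    apply integral_mono_on hab'
    · exact ((continuous_const.mul (((continuous_const.sub (continuous_pow (m+1))).div_const
        c).mul hgcont)).add (continuous_const.mul ((((continuous_pow (m+1)).sub
        continuous_const).div_const c).mul hgcont))).intervalIntegrable a b
    · exact (continuous_const.mul ((continuous_pow m).mul hgcont)).intervalIntegrable a b
    · intro t ht
      have hkey := key_ptw a b t m ha.le ht.1 ht.2
      have h6 : a ^ m * ((b ^ (m+1) - t ^ (m+1)) / c * g t) +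
          b ^ m * ((t ^ (m+1) - a ^ (m+1)) / c * g t)
          = (a ^ m * (b ^ (m+1) - t ^ (m+1)) + b ^ m * (t ^ (m+1) - a ^ (m+1))) / c * g t := by
        ring
      have h7 : B / c * (t ^ m * g t) = t ^ m * (b ^ (m+1) - a ^ (m+1)) / c * g t := by
        rw [hBdef]; ring
      rw [h6, h7]
      apply mul_le_mul_of_nonneg_right _ (hgnn t)
      exact (div_le_div_iff_of_pos_right hc0).mpr hkey
  -- final assembly
  have hsum : B / c * (a ^ m * |v a| + b ^ m * |v b|) ≤ (a ^ m + b ^ m) * J + B / c * W := by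
    have h8 := mul_le_mul_of_nonneg_left Ia (pow_nonneg ha.le m)
    have h9 := mul_le_mul_of_nonneg_left Ib (pow_nonneg hb0.le m)
    have h10 : a ^ m * (J + Q) + b ^ m * (J + (B / c * G b - Q))
        = (a ^ m + b ^ m) * J +
          (a ^ m * (∫ t in a..b, (b ^ (m+1) - t ^ (m+1)) / c * g t) +
           b ^ m * (∫ t in a..b, (t ^ (m+1) - a ^ (m+1)) / c * g t)) := by
      rw [hGbeq, ← hQeq]; ring
    nlinarith [hWbound]
  have hJ' : (∫ r in a..b, |v r| * r ^ m) = J := by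
    rw [hJdef]; apply integral_congr; intro r _; ring
  have hW' : (∫ t in a..b, t ^ m * |v' t|) = W := by
    rw [hWdef]; apply integral_congr; intro t ht
    show t ^ m * |v' t| = t ^ m * g t
    rw [hgeq t (hIcc ▸ ht)]
  rw [hJ', hW']
  have hfinal : a ^ m * |v a| + b ^ m * |v b|
      = (c / B) * (B / c * (a ^ m * |v a| + b ^ m * |v b|)) := by
    field_simp
  rw [hfinal]
  calc (c / B) * (B / c * (a ^ m * |v a| + b ^ m * |v b|))
      ≤ (c / B) * ((a ^ m + b ^ m) * J + B / c * W) :=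
        mul_le_mul_of_nonneg_left hsum (by positivity)
    _ = (c * a ^ m + c * b ^ m) / B * J + W := by
        field_simp
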